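/- For all integers n ≥ 0 and m ≥ 0: Σ_{k=0}^{n} C(2k, k)·O_k·H_{n−k}(m)/4^k = (1/2)·Σ_{k=0}^{n} C(2k, k)·H_{n−k}(m+1)/4^k. -/

import Mathlib

open Finset

/-- Multiple harmonic-like numbers `H_n(m)`: the sum of `1/(k_1 ⋯ k_m)` over all
`m`-tuples of positive integers with `k_1 + ⋯ + k_m ≤ n`. -/
def Hml (n m : ℕ) : ℚ :=
  ∑ k ∈ (Fintype.piFinset fun _ : Fin m => Finset.Icc 1 n).filter
      (fun k => ∑ i, k i ≤ n),
    ∏ i, (1 : ℚ) / (k i : ℚ)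

/-- The `n`-th harmonic number. -/
def harm (n : ℕ) : ℚ := ∑ j ∈ Finset.Icc 1 n, (1 : ℚ) / (j : ℚ)

/-- The `n`-th second-order harmonic number. -/
def harm2 (n : ℕ) : ℚ := ∑ j ∈ Finset.Icc 1 n, (1 : ℚ) / (j : ℚ) ^ 2

/-- The `n`-th odd harmonic number. -/
def oddharm (n : ℕ) : ℚ := ∑ k ∈ Finset.Icc 1 n, (1 : ℚ) / (2 * (k : ℚ) - 1)

/-- Signed Stirling numbers of the first kind. -/
def stirlingFirst : ℕ → ℕ → ℤ
  | 0, 0 => 1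
  | 0, _ + 1 => 0
  | _ + 1, 0 => 0
  | n + 1, k + 1 => stirlingFirst n k - n * stirlingFirst n (k + 1)

/-- Generalized binomial coefficient `C(r, k) = r(r−1)⋯(r−k+1)/k!`. -/
noncomputable def gchoose (r : ℂ) (k : ℕ) : ℂ :=
  (∏ i ∈ Finset.range k, (r - i)) / (k.factorial : ℂ)

def cb (k : ℕ) : ℚ := ((2 * k).choose k : ℚ) / 4 ^ k

lemma cb_rec (k : ℕ) : cb (k + 1) = cb k * (2 * k + 1) / (2 * k + 2) := by
  have h := Nat.succ_mul_centralBinom_succ k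
  have h2 : ((k + 1 : ℕ) : ℚ) * ((2 * (k+1)).choose (k+1) : ℚ)
      = 2 * (2 * k + 1) * ((2 * k).choose k : ℚ) := by
    have := congrArg (fun x : ℕ => (x : ℚ)) h
    push_cast [Nat.centralBinom] at this ⊢
    convert this using 2 <;> ring_nf
  unfold cb
  have h4 : (4 : ℚ) ^ (k+1) = 4 ^ k * 4 := by ring
  field_simp at h2 ⊢
  push_cast at h2 ⊢
  linear_combination (2 * (4:ℚ) ^ k) * h2

lemma cb_tele (s : ℕ) : ∑ j ∈ range s, cb j / (j + 1) = 2 - 2 * cb s := by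
  induction s with
  | zero => simp [cb]
  | succ s ih =>
    rw [Finset.sum_range_succ, ih, cb_rec]
    have : ((s : ℚ) + 1) ≠ 0 := by positivity
    field_simp
    ring

lemma oddharm_succ (s : ℕ) : oddharm (s + 1) = oddharm s + 1 / (2 * s + 1) := by
  unfold oddharm
  rw [Finset.sum_Icc_succ_top (by omega)]
  push_cast
  rw [show (2:ℚ) * ((s:ℚ) + 1) - 1 = 2 * s + 1 by ring]

lemma core (s : ℕ) : ∑ i ∈ Icc 1 s, cb (s - i) / i = 2 * cb s * oddharm s := by
  induction s with
  | zero => simp [oddharm]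
  | succ s ih =>
    rw [Finset.sum_Icc_succ_top (by omega)]
    have key : ∑ i ∈ Icc 1 s, cb (s + 1 - i) / i
        = ∑ i ∈ Icc 1 s, ((2 * s + 1) / (2 * s + 2) * (cb (s - i) / i)
            - (1 / (2 * s + 2)) * (cb (s - i) / ((s - i : ℕ) + 1))) := by
      apply Finset.sum_congr rfl
      intro i hi
      simp only [mem_Icc] at hi
      have h1 : s + 1 - i = (s - i) + 1 := by omega
      rw [h1, cb_rec]
      have hj : ((s - i : ℕ) : ℚ) = (s : ℚ) - (i : ℚ) := by
        push_cast [Nat.cast_sub hi.2]; ring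
      have hi0 : ((i : ℚ)) ≠ 0 := by
        have : (1:ℚ) ≤ (i:ℚ) := by exact_mod_cast hi.1
        linarith
      have hji : ((s - i : ℕ) : ℚ) + 1 ≠ 0 := by positivity
      have h2 : (2 * ((s - i : ℕ) : ℚ) + 2) ≠ 0 := by positivity
      have hs2 : (2 * (s : ℚ) + 2) ≠ 0 := by positivity
      rw [hj] at *
      field_simp
      ring
    rw [key, Finset.sum_sub_distrib, ← Finset.mul_sum, ← Finset.mul_sum]
    have reidx : ∑ i ∈ Icc 1 s, cb (s - i) / ((s - i : ℕ) + 1)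
        = ∑ j ∈ range s, cb j / (j + 1) := by
      apply Finset.sum_nbij' (fun i => s - i) (fun j => s - j)
      · intro a ha; simp only [mem_Icc] at ha; simp only [mem_range]; omega
      · intro a ha; simp only [mem_range] at ha; simp only [mem_Icc]; omega
      · intro a ha; simp only [mem_Icc] at ha; omega
      · intro a ha; simp only [mem_range] at ha; omega
      · intro a ha; rfl
    rw [reidx, cb_tele, ih, oddharm_succ, cb_rec]
    have hs1 : ((s : ℚ) + 1) ≠ 0 := by positivity
    have hs2 : (2 * (s : ℚ) + 1) ≠ 0 := by positivity
    simp only [Nat.sub_self, Nat.cast_add, Nat.cast_one]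
    rw [show cb 0 = 1 by simp [cb]]
    field_simp [cb]
    ring

lemma Hml_succ (n m : ℕ) :
    Hml n (m + 1) = ∑ i ∈ Icc 1 n, (1 / (i : ℚ)) * Hml (n - i) m := by
  unfold Hml
  simp only [Finset.mul_sum]
  rw [Finset.sum_sigma']
  refine Finset.sum_nbij'
      (fun k => (⟨k 0, Fin.tail k⟩ : Σ _ : ℕ, (Fin m → ℕ)))
      (fun p => (Fin.cons p.1 p.2 : Fin (m + 1) → ℕ)) ?_ ?_ ?_ ?_ ?_
  · intro k hk
    simp only [Finset.mem_filter, Fintype.mem_piFinset, mem_Icc] at hk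
    obtain ⟨hmem, hsum⟩ := hk
    rw [Fin.sum_univ_succ] at hsum
    simp only [Finset.mem_sigma, mem_Icc, Finset.mem_filter,
      Fintype.mem_piFinset, mem_Icc, Fin.tail]
    have h0 := hmem 0
    refine ⟨⟨h0.1, by omega⟩, fun j => ?_, by omega⟩
    have hj := hmem j.succ
    have hle : k j.succ ≤ ∑ i : Fin m, k i.succ :=
      Finset.single_le_sum (f := fun i : Fin m => k i.succ) (fun i _ => Nat.zero_le _) (Finset.mem_univ j)
    exact ⟨hj.1, by omega⟩
  · rintro ⟨i, k⟩ hp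
    simp only [Finset.mem_sigma, mem_Icc, Finset.mem_filter,
      Fintype.mem_piFinset] at hp ⊢
    obtain ⟨⟨hi1, hi2⟩, hk, hsum⟩ := hp
    refine ⟨fun a => ?_, ?_⟩
    · refine Fin.cases ?_ ?_ a
      · simp only [Fin.cons_zero, mem_Icc]; omega
      · intro j
        simp only [Fin.cons_succ, mem_Icc]
        have := hk j
        omega
    · rw [Fin.sum_univ_succ]
      simp only [Fin.cons_zero, Fin.cons_succ]
      omega
  · intro k hk
    exact Fin.cons_self_tail k
  · rintro ⟨i, k⟩ hp
    simp only [Fin.cons_zero, Fin.tail_cons]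
  · intro k hk
    rw [Fin.prod_univ_succ]
    simp only [Fin.tail]

theorem stmt_19 (n m : ℕ) :
    ∑ k ∈ Finset.range (n + 1),
        ((2 * k).choose k : ℚ) * oddharm k * Hml (n - k) m / 4 ^ k =
      (1 / 2) * ∑ k ∈ Finset.range (n + 1),
        ((2 * k).choose k : ℚ) * Hml (n - k) (m + 1) / 4 ^ k := by
  have hterm : ∀ k ∈ Finset.range (n + 1),
      ((2 * k).choose k : ℚ) * oddharm k * Hml (n - k) m / 4 ^ k
        = ∑ i ∈ Icc 1 k, 1 / 2 * (cb (k - i) / i) * Hml (n - k) m := by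
    intro k _
    have h : ∑ i ∈ Icc 1 k, 1 / 2 * (cb (k - i) / i) * Hml (n - k) m
        = 1 / 2 * (∑ i ∈ Icc 1 k, cb (k - i) / i) * Hml (n - k) m := by
      simp only [Finset.mul_sum, Finset.sum_mul]
    rw [h, core k]
    unfold cb
    ring
  have hterm2 : ∀ k ∈ Finset.range (n + 1),
      ((2 * k).choose k : ℚ) * Hml (n - k) (m + 1) / 4 ^ k
        = ∑ i ∈ Icc 1 (n - k), cb k * (1 / i) * Hml (n - k - i) m := by
    intro k _
    rw [Hml_succ, Finset.mul_sum, Finset.sum_div]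
    refine Finset.sum_congr rfl fun i _ => ?_
    unfold cb
    ring
  rw [Finset.sum_congr rfl hterm, Finset.sum_congr rfl hterm2,
    Finset.sum_sigma', Finset.sum_sigma', Finset.mul_sum]
  refine Finset.sum_nbij'
      (fun p => (⟨p.1 - p.2, p.2⟩ : Σ _ : ℕ, ℕ))
      (fun p => (⟨p.1 + p.2, p.2⟩ : Σ _ : ℕ, ℕ)) ?_ ?_ ?_ ?_ ?_
  · rintro ⟨k, i⟩ hp
    simp only [Finset.mem_sigma, Finset.mem_range, mem_Icc] at hp ⊢
    omega
  · rintro ⟨k, i⟩ hp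
    simp only [Finset.mem_sigma, Finset.mem_range, mem_Icc] at hp ⊢
    omega
  · rintro ⟨k, i⟩ hp
    simp only [Finset.mem_sigma, Finset.mem_range, mem_Icc] at hp
    simp only [Sigma.mk.inj_iff, heq_eq_eq]
    exact ⟨by omega, trivial⟩
  · rintro ⟨k, i⟩ hp
    simp only [Finset.mem_sigma, Finset.mem_range, mem_Icc] at hp
    simp only [Sigma.mk.inj_iff, heq_eq_eq]
    exact ⟨by omega, trivial⟩
  · rintro ⟨k, i⟩ hp
    simp only [Finset.mem_sigma, Finset.mem_range, mem_Icc] at hp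
    simp only
    rw [show n - (k - i) - i = n - k by omega]
    ring
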